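/- Let χ_S, χ_A, α, D_A > 0. Then there exists a unique c > 0 such that χ_S − c = χ_A c / √(c² + 4 α D_A); moreover this c satisfies 0 < c < χ_S. -/
import Mathlib


open MeasureTheory Filter

/-- Existence and uniqueness of the wave speed for the two-signal model of Saragosti et al. -/
theorem stmt_7 (χS χA α DA : ℝ) (hχS : 0 < χS) (hχA : 0 < χA) (hα : 0 < α)
    (hDA : 0 < DA) :
    (∃! c : ℝ, 0 < c ∧ χS - c = χA * c / Real.sqrt (c ^ 2 + 4 * α * DA)) ∧
    (∀ c : ℝ, 0 < c → χS - c = χA * c / Real.sqrt (c ^ 2 + 4 * α * DA) → c < χS) := by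
  set K := 4 * α * DA with hK
  have hKpos : 0 < K := by positivity
  have hsq : ∀ c : ℝ, 0 < Real.sqrt (c ^ 2 + K) := fun c =>
    Real.sqrt_pos.2 (by positivity)
  set f : ℝ → ℝ := fun c => χS - c - χA * c / Real.sqrt (c ^ 2 + K) with hf
  -- second part first
  have hlt : ∀ c : ℝ, 0 < c → χS - c = χA * c / Real.sqrt (c ^ 2 + K) → c < χS := by
    intro c hc heq
    have hpos : 0 < χA * c / Real.sqrt (c ^ 2 + K) :=
      div_pos (mul_pos hχA hc) (hsq c)
    linarith
  have hanti : StrictAntiOn f (Set.Ici 0) := by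
    intro a ha b hb hab
    simp only [hf]
    have ha0 : (0:ℝ) ≤ a := ha
    have hb0 : (0:ℝ) ≤ b := hb
    have h1 : a / Real.sqrt (a ^ 2 + K) ≤ b / Real.sqrt (b ^ 2 + K) := by
      rw [div_le_div_iff₀ (hsq a) (hsq b)]
      have e1 : a * Real.sqrt (b ^ 2 + K) = Real.sqrt (a ^ 2 * (b ^ 2 + K)) := by
        rw [Real.sqrt_mul (sq_nonneg a), Real.sqrt_sq ha0]
      have e2 : b * Real.sqrt (a ^ 2 + K) = Real.sqrt (b ^ 2 * (a ^ 2 + K)) := by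
        rw [Real.sqrt_mul (sq_nonneg b), Real.sqrt_sq hb0]
      rw [e1, e2]
      apply Real.sqrt_le_sqrt
      nlinarith [mul_le_mul hab.le hab.le ha0 hb0]
    have h2 : χA * a / Real.sqrt (a ^ 2 + K) ≤ χA * b / Real.sqrt (b ^ 2 + K) := by
      rw [mul_div_assoc, mul_div_assoc]
      exact mul_le_mul_of_nonneg_left h1 hχA.le
    linarith
  have hcont : Continuous f := by
    apply Continuous.sub (by continuity)
    exact Continuous.div (by continuity)
      (Real.continuous_sqrt.comp (by continuity))
      (fun x => (hsq x).ne')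
  have hf0 : f 0 = χS := by simp [hf]
  have hfS : f χS < 0 := by
    have : 0 < χA * χS / Real.sqrt (χS ^ 2 + K) :=
      div_pos (mul_pos hχA hχS) (hsq χS)
    simp only [hf]
    linarith
  have hmem : (0:ℝ) ∈ Set.Ioo (f χS) (f 0) := by
    constructor
    · exact hfS
    · rw [hf0]; exact hχS
  obtain ⟨c, hcIoo, hfc⟩ := intermediate_value_Ioo' hχS.le hcont.continuousOn hmem
  refine ⟨⟨c, ⟨hcIoo.1, ?_⟩, ?_⟩, hlt⟩
  · have := hfc
    simp only [hf] at this
    linarith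
  · rintro c' ⟨hc', heq'⟩
    have hfc' : f c' = 0 := by simp only [hf]; linarith
    exact hanti.injOn (Set.mem_Ici.2 hc'.le) (Set.mem_Ici.2 hcIoo.1.le)
      (by rw [hfc', hfc])
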